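/- Let f be a transcendental entire function having no oscillatory wandering domain, i.e. no connected component of F(f) is contained in BU(f). Then BU(f) ⊆ J(f). -/

import Mathlib

open Filter Topology Bornology Set

noncomputable section

/-- An entire function: holomorphic on all of ℂ. A transcendental entire function
is entire and not a polynomial. -/
def TranscendentalEntire (f : ℂ → ℂ) : Prop :=
  Differentiable ℂ f ∧ ¬ ∃ p : Polynomial ℂ, ∀ z, f z = p.eval z

/-- The escaping set of a single entire function. -/
def escapingSet (f : ℂ → ℂ) : Set ℂ :=
  {z | Tendsto (fun n => ‖f^[n] z‖) atTop atTop}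

/-- The filled Julia set of a single entire function. -/
def filledJuliaSet (f : ℂ → ℂ) : Set ℂ :=
  {z | IsBounded (Set.range fun n => f^[n] z)}

/-- The bungee set of a single entire function. -/
def bungeeSet (f : ℂ → ℂ) : Set ℂ := (escapingSet f ∪ filledJuliaSet f)ᶜ

/-- A transcendental semigroup: a nonempty set of transcendental entire functions
closed under composition. -/
def TranscendentalSemigroup (H : Set (ℂ → ℂ)) : Prop :=
  H.Nonempty ∧ (∀ h ∈ H, TranscendentalEntire h) ∧ ∀ g ∈ H, ∀ h ∈ H, g ∘ h ∈ H

/-- The filled Julia set of a semigroup. -/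
def sgFilledJuliaSet (H : Set (ℂ → ℂ)) : Set ℂ :=
  {z | IsBounded ((fun h => h z) '' H)}

/-- The escaping set of a semigroup. -/
def sgEscapingSet (H : Set (ℂ → ℂ)) : Set ℂ :=
  {z | ∀ R > 0, {h ∈ H | ‖h z‖ ≤ R}.Finite}

/-- The bungee set of a semigroup. -/
def sgBungeeSet (H : Set (ℂ → ℂ)) : Set ℂ := (sgEscapingSet H ∪ sgFilledJuliaSet H)ᶜ

/-- A sequence of functions diverges to ∞ locally uniformly on `U`. -/
def DivergesLocUnifOn (s : ℕ → ℂ → ℂ) (U : Set ℂ) : Prop :=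
  ∀ C ⊆ U, IsCompact C → ∀ M > 0, ∀ᶠ k in atTop, ∀ w ∈ C, M < ‖s k w‖

/-- The Fatou set of a semigroup: points with an open neighborhood on which every
sequence from `H` has a subsequence converging locally uniformly or diverging to ∞
locally uniformly. -/
def sgFatouSet (H : Set (ℂ → ℂ)) : Set ℂ :=
  {z | ∃ U : Set ℂ, IsOpen U ∧ z ∈ U ∧
    ∀ s : ℕ → ℂ → ℂ, (∀ n, s n ∈ H) →
      ∃ φ : ℕ → ℕ, StrictMono φ ∧
        ((∃ g : ℂ → ℂ, TendstoLocallyUniformlyOn (fun k => s (φ k)) g atTop U) ∨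
          DivergesLocUnifOn (fun k => s (φ k)) U)}

/-- The Julia set of a semigroup. -/
def sgJuliaSet (H : Set (ℂ → ℂ)) : Set ℂ := (sgFatouSet H)ᶜ

/-- The semigroup of (positive) iterates of a single function. -/
def iterateSemigroup (f : ℂ → ℂ) : Set (ℂ → ℂ) := {g | ∃ n ≥ 1, g = f^[n]}

/-- The Fatou set of a single function. -/
def fatouSet (f : ℂ → ℂ) : Set ℂ := sgFatouSet (iterateSemigroup f)

/-- The Julia set of a single function. -/
def juliaSet (f : ℂ → ℂ) : Set ℂ := (fatouSet f)ᶜ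

/-- An abelian semigroup of functions. -/
def AbelianSG (H : Set (ℂ → ℂ)) : Prop := ∀ g ∈ H, ∀ h ∈ H, g ∘ h = h ∘ g

/-- `a` is a finite asymptotic value of `f`. -/
def AsymptoticValue (f : ℂ → ℂ) (a : ℂ) : Prop :=
  ∃ γ : ℝ → ℂ, Continuous γ ∧ Tendsto (fun t => ‖γ t‖) atTop atTop ∧
    Tendsto (fun t => f (γ t)) atTop (nhds a)


/-- Witness for non-escaping: strictly monotone subsequence (all ≥ 1) with bounded values. -/
lemma nonesc_witness (f : ℂ → ℂ) {z : ℂ} (hz : z ∉ escapingSet f) :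
    ∃ R : ℝ, ∃ m : ℕ → ℕ, StrictMono m ∧ (∀ k, 1 ≤ m k) ∧
      ∀ k, ‖f^[m k] z‖ < R := by
  simp only [escapingSet, mem_setOf_eq, tendsto_atTop, not_forall] at hz
  obtain ⟨R, hR⟩ := hz
  rw [not_eventually] at hR
  simp only [not_le] at hR
  obtain ⟨φ, hφ, hφ'⟩ := Filter.extraction_of_frequently_atTop hR
  refine ⟨R, fun k => φ (k + 1), ?_, ?_, fun k => hφ' (k + 1)⟩
  · exact hφ.comp fun a b h => by omega
  · intro k
    exact le_trans (Nat.succ_le_succ (Nat.zero_le k)) hφ.le_apply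

/-- Witness for non-filled: subsequence (all ≥ 1) with values > k. -/
lemma nonfil_witness (f : ℂ → ℂ) {z : ℂ} (hz : z ∉ filledJuliaSet f) :
    ∃ m : ℕ → ℕ, (∀ k, 1 ≤ m k) ∧ ∀ k : ℕ, (k : ℝ) < ‖f^[m k] z‖ := by
  simp only [filledJuliaSet, mem_setOf_eq, isBounded_iff_forall_norm_le] at hz
  push_neg at hz
  have h : ∀ k : ℕ, ∃ n, 1 ≤ n ∧ (k : ℝ) < ‖f^[n] z‖ := by
    intro k
    obtain ⟨x, ⟨n, rfl⟩, hx⟩ := hz (max (k : ℝ) (‖z‖))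
    refine ⟨n, ?_, lt_of_le_of_lt (le_max_left _ _) hx⟩
    rcases Nat.eq_zero_or_pos n with h0 | h1
    · exfalso
      simp only [h0, Function.iterate_zero_apply] at hx
      exact absurd (le_max_right (k : ℝ) (‖z‖)) (not_le.2 hx)
    · exact h1
  choose m hm1 hm2 using h
  exact ⟨m, hm1, hm2⟩

/-- Around a non-escaping Fatou point, no point escapes. -/
lemma esc_compl_open (f : ℂ → ℂ) {v : ℂ} (hv : v ∈ fatouSet f) (hesc : v ∉ escapingSet f) :
    ∃ U : Set ℂ, IsOpen U ∧ v ∈ U ∧ U ⊆ (escapingSet f)ᶜ := by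
  obtain ⟨R, m, hmmono, hm1, hmR⟩ := nonesc_witness f hesc
  obtain ⟨U, hUo, hvU, hnorm⟩ := hv
  obtain ⟨φ, hφ, hcase⟩ := hnorm (fun k => f^[m k]) (fun k => ⟨m k, hm1 k, rfl⟩)
  rcases hcase with ⟨g, hg⟩ | hdiv
  · refine ⟨U, hUo, hvU, fun u hu hue => ?_⟩
    have h1 : Tendsto (fun k => f^[m (φ k)] u) atTop (𝓝 (g u)) := hg.tendsto_at hu
    have h2 : Tendsto (fun k => ‖f^[m (φ k)] u‖) atTop (𝓝 (‖g u‖)) :=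
      (continuous_norm.tendsto _).comp h1
    have h3 : Tendsto (fun k => ‖f^[m (φ k)] u‖) atTop atTop :=
      (show Tendsto (fun n => ‖f^[n] u‖) atTop atTop from hue).comp
        ((hmmono.comp hφ).tendsto_atTop)
    exact not_tendsto_atTop_of_tendsto_nhds h2 h3
  · exfalso
    have hd := hdiv {v} (singleton_subset_iff.2 hvU) isCompact_singleton (max R 1)
      (lt_of_lt_of_le zero_lt_one (le_max_right _ _))
    obtain ⟨k, hk⟩ := hd.exists
    exact absurd (hk v rfl) (not_lt.2 ((hmR (φ k)).le.trans (le_max_left _ _)))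

/-- Around an escaping Fatou point, every point escapes. -/
lemma esc_open (f : ℂ → ℂ) {v : ℂ} (hv : v ∈ fatouSet f) (hesc : v ∈ escapingSet f) :
    ∃ U : Set ℂ, IsOpen U ∧ v ∈ U ∧ U ⊆ escapingSet f := by
  obtain ⟨U, hUo, hvU, hnorm⟩ := hv
  refine ⟨U, hUo, hvU, fun u hu => ?_⟩
  by_contra hue
  obtain ⟨R, m, hmmono, hm1, hmR⟩ := nonesc_witness f hue
  obtain ⟨φ, hφ, hcase⟩ := hnorm (fun k => f^[m k]) (fun k => ⟨m k, hm1 k, rfl⟩)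
  rcases hcase with ⟨g, hg⟩ | hdiv
  · have h1 : Tendsto (fun k => f^[m (φ k)] v) atTop (𝓝 (g v)) := hg.tendsto_at hvU
    have h2 : Tendsto (fun k => ‖f^[m (φ k)] v‖) atTop (𝓝 (‖g v‖)) :=
      (continuous_norm.tendsto _).comp h1
    have h3 : Tendsto (fun k => ‖f^[m (φ k)] v‖) atTop atTop :=
      (show Tendsto (fun n => ‖f^[n] v‖) atTop atTop from hesc).comp
        ((hmmono.comp hφ).tendsto_atTop)
    exact not_tendsto_atTop_of_tendsto_nhds h2 h3
  · have hd := hdiv {u} (singleton_subset_iff.2 hu) isCompact_singleton (max R 1)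
      (lt_of_lt_of_le zero_lt_one (le_max_right _ _))
    obtain ⟨k, hk⟩ := hd.exists
    exact absurd (hk u rfl) (not_lt.2 ((hmR (φ k)).le.trans (le_max_left _ _)))

/-- Around a bounded-orbit Fatou point, every point has bounded orbit. -/
lemma fil_open (f : ℂ → ℂ) {v : ℂ} (hv : v ∈ fatouSet f) (hfil : v ∈ filledJuliaSet f) :
    ∃ U : Set ℂ, IsOpen U ∧ v ∈ U ∧ U ⊆ filledJuliaSet f := by
  obtain ⟨R, hR⟩ := isBounded_iff_forall_norm_le.1 (show IsBounded (Set.range fun n => f^[n] v) from hfil)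
  have hRn : ∀ n : ℕ, ‖f^[n] v‖ ≤ R := by
    intro n
    have := hR _ ⟨n, rfl⟩
    exact this
  have hR0 : (0 : ℝ) ≤ R := le_trans (norm_nonneg _) (hRn 0)
  obtain ⟨U, hUo, hvU, hnorm⟩ := hv
  refine ⟨U, hUo, hvU, fun u hu => ?_⟩
  by_contra hue
  obtain ⟨m, hm1, hmk⟩ := nonfil_witness f hue
  obtain ⟨φ, hφ, hcase⟩ := hnorm (fun k => f^[m k]) (fun k => ⟨m k, hm1 k, rfl⟩)
  rcases hcase with ⟨g, hg⟩ | hdiv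
  · have h1 : Tendsto (fun k => f^[m (φ k)] u) atTop (𝓝 (g u)) := hg.tendsto_at hu
    have h2 : Tendsto (fun k => ‖f^[m (φ k)] u‖) atTop (𝓝 (‖g u‖)) :=
      (continuous_norm.tendsto _).comp h1
    have h3 : Tendsto (fun k => ‖f^[m (φ k)] u‖) atTop atTop :=
      tendsto_atTop_mono
        (fun k => ((Nat.cast_le.2 hφ.le_apply).trans (hmk (φ k)).le))
        tendsto_natCast_atTop_atTop
    exact not_tendsto_atTop_of_tendsto_nhds h2 h3
  · have hd := hdiv {v} (singleton_subset_iff.2 hvU) isCompact_singleton (R + 1)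
      (by linarith)
    obtain ⟨k, hk⟩ := hd.exists
    have := hk v rfl
    have := hRn (m (φ k))
    linarith

/-- Around an unbounded-orbit Fatou point, every point has unbounded orbit. -/
lemma fil_compl_open (f : ℂ → ℂ) {v : ℂ} (hv : v ∈ fatouSet f) (hfil : v ∉ filledJuliaSet f) :
    ∃ U : Set ℂ, IsOpen U ∧ v ∈ U ∧ U ⊆ (filledJuliaSet f)ᶜ := by
  obtain ⟨m, hm1, hmk⟩ := nonfil_witness f hfil
  obtain ⟨U, hUo, hvU, hnorm⟩ := hv
  obtain ⟨φ, hφ, hcase⟩ := hnorm (fun k => f^[m k]) (fun k => ⟨m k, hm1 k, rfl⟩)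
  rcases hcase with ⟨g, hg⟩ | hdiv
  · exfalso
    have h1 : Tendsto (fun k => f^[m (φ k)] v) atTop (𝓝 (g v)) := hg.tendsto_at hvU
    have h2 : Tendsto (fun k => ‖f^[m (φ k)] v‖) atTop (𝓝 (‖g v‖)) :=
      (continuous_norm.tendsto _).comp h1
    have h3 : Tendsto (fun k => ‖f^[m (φ k)] v‖) atTop atTop :=
      tendsto_atTop_mono
        (fun k => ((Nat.cast_le.2 hφ.le_apply).trans (hmk (φ k)).le))
        tendsto_natCast_atTop_atTop
    exact not_tendsto_atTop_of_tendsto_nhds h2 h3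
  · refine ⟨U, hUo, hvU, fun u hu huf => ?_⟩
    obtain ⟨C, hC⟩ := isBounded_iff_forall_norm_le.1 (show IsBounded (Set.range fun n => f^[n] u) from huf)
    have hCn : ∀ n : ℕ, ‖f^[n] u‖ ≤ C := by
      intro n
      have := hC _ ⟨n, rfl⟩
      exact this
    have hC0 : (0 : ℝ) ≤ C := le_trans (norm_nonneg _) (hCn 0)
    have hd := hdiv {u} (singleton_subset_iff.2 hu) isCompact_singleton (C + 1)
      (by linarith)
    obtain ⟨k, hk⟩ := hd.exists
    have := hk u rfl
    have := hCn (m (φ k))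
    linarith

/-- a transcendental entire function with no oscillatory wandering domain
satisfies BU(f) ⊆ J(f). -/
theorem stmt_12 (f : ℂ → ℂ) (hf : TranscendentalEntire f)
    (hosc : ∀ z ∈ fatouSet f, ¬ connectedComponentIn (fatouSet f) z ⊆ bungeeSet f) :
    bungeeSet f ⊆ juliaSet f := by
  intro z hz
  by_contra hJ
  have hzF : z ∈ fatouSet f := by
    simpa [juliaSet] using hJ
  have hzB := hz
  simp only [bungeeSet, mem_compl_iff, mem_union, not_or] at hzB
  obtain ⟨hze, hzf⟩ := hzB
  set K := connectedComponentIn (fatouSet f) z with hKdef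
  have hKF : K ⊆ fatouSet f := connectedComponentIn_subset _ _
  have hzK : z ∈ K := mem_connectedComponentIn hzF
  have hpre : IsPreconnected K := isPreconnected_connectedComponentIn
  have hKe : K ⊆ (escapingSet f)ᶜ := by
    have hcov : K ⊆ interior (escapingSet f)ᶜ ∪ interior (escapingSet f) := by
      intro w hw
      by_cases hwe : w ∈ escapingSet f
      · obtain ⟨U, hUo, hwU, hUs⟩ := esc_open f (hKF hw) hwe
        exact Or.inr (mem_interior.2 ⟨U, hUs, hUo, hwU⟩)
      · obtain ⟨U, hUo, hwU, hUs⟩ := esc_compl_open f (hKF hw) hwe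
        exact Or.inl (mem_interior.2 ⟨U, hUs, hUo, hwU⟩)
    have hne : (K ∩ interior (escapingSet f)ᶜ).Nonempty := by
      obtain ⟨U, hUo, hwU, hUs⟩ := esc_compl_open f hzF hze
      exact ⟨z, hzK, mem_interior.2 ⟨U, hUs, hUo, hwU⟩⟩
    exact (hpre.subset_left_of_subset_union isOpen_interior isOpen_interior
      (disjoint_compl_left.mono interior_subset interior_subset) hcov hne).trans
      interior_subset
  have hKf : K ⊆ (filledJuliaSet f)ᶜ := by
    have hcov : K ⊆ interior (filledJuliaSet f)ᶜ ∪ interior (filledJuliaSet f) := by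
      intro w hw
      by_cases hwe : w ∈ filledJuliaSet f
      · obtain ⟨U, hUo, hwU, hUs⟩ := fil_open f (hKF hw) hwe
        exact Or.inr (mem_interior.2 ⟨U, hUs, hUo, hwU⟩)
      · obtain ⟨U, hUo, hwU, hUs⟩ := fil_compl_open f (hKF hw) hwe
        exact Or.inl (mem_interior.2 ⟨U, hUs, hUo, hwU⟩)
    have hne : (K ∩ interior (filledJuliaSet f)ᶜ).Nonempty := by
      obtain ⟨U, hUo, hwU, hUs⟩ := fil_compl_open f hzF hzf
      exact ⟨z, hzK, mem_interior.2 ⟨U, hUs, hUo, hwU⟩⟩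
    exact (hpre.subset_left_of_subset_union isOpen_interior isOpen_interior
      (disjoint_compl_left.mono interior_subset interior_subset) hcov hne).trans
      interior_subset
  have hKB : K ⊆ bungeeSet f := by
    intro w hw
    simp only [bungeeSet, mem_compl_iff, mem_union, not_or]
    exact ⟨hKe hw, hKf hw⟩
  exact hosc z hzF hKB
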